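/- Under the hypotheses of the key error estimate — I ⊆ ℝ an interval containing ω*, ω_r, ω_{r+1}; f twice differentiable on I with f′(ω*) = 0, f″ Lipschitz on I with constant γ, and |f″(ω_r)| ≥ ℓ₁ > 0; g three times differentiable on I with |g‴| ≤ γ₁ on I and |g″(ω_r)| ≥ ℓ₂ > 0; f′(ω_r) = g′(ω_r); g′(ω_{r+1}) = 0 — set δ := max{|ω_{r+1} − ω*|, |ω_r − ω*|}, c₁ := γ₁/ℓ₂, c₂ := 1/(ℓ₁·ℓ₂), and c₃ := γ/(2·ℓ₁) + γ₁/ℓ₂. Then (1 − c₁·δ)·|ω_{r+1} − ω*| ≤ c₂·|g″(ω_r) − f″(ω_r)|·|f′(ω_r)| + c₃·|ω_r − ω*|². -/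

import Mathlib

lemma aux_one_side (I : Set ℝ) (hI : Convex ℝ I) (a b : ℝ) (ha : a ∈ I) (hb : b ∈ I)
    (K : ℝ) (ψ ψ' : ℝ → ℝ)
    (hψ : ∀ x ∈ I, HasDerivAt ψ (ψ' x) x)
    (hlip : ∀ x ∈ I, |ψ' x| ≤ K * |x - a|)
    (hψa : ψ a = 0) :
    ψ b ≤ K / 2 * (b - a) ^ 2 := by
  set u : ℝ → ℝ := fun x => K / 2 * (x - a) ^ 2 - ψ x with hu
  have hu' : ∀ x ∈ I, HasDerivAt u (K * (x - a) - ψ' x) x := by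
    intro x hx
    have h1 : HasDerivAt (fun x => K / 2 * (x - a) ^ 2) (K * (x - a)) x := by
      have h := (((hasDerivAt_id x).sub_const a).pow 2).const_mul (K / 2)
      refine h.congr_deriv ?_
      simp only [id_eq]
      push_cast
      ring
    exact h1.sub (hψ x hx)
  have hsub : Set.uIcc a b ⊆ I := (hI.ordConnected).uIcc_subset ha hb
  have ha0 : u a = 0 := by simp [hu, hψa]
  have key : 0 ≤ u b := by
    rcases le_total a b with hab | hab
    · have hIcc : Set.Icc a b ⊆ I := by rwa [Set.uIcc_of_le hab] at hsub
      have mono : MonotoneOn u (Set.Icc a b) := by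
        apply monotoneOn_of_deriv_nonneg (convex_Icc a b)
        · exact fun x hx => (hu' x (hIcc hx)).continuousAt.continuousWithinAt
        · intro x hx
          rw [interior_Icc] at hx
          exact (hu' x (hIcc (Set.mem_Icc_of_Ioo hx))).differentiableAt.differentiableWithinAt
        · intro x hx
          rw [interior_Icc] at hx
          have hxI : x ∈ I := hIcc (Set.mem_Icc_of_Ioo hx)
          rw [(hu' x hxI).deriv]
          have h1 := hlip x hxI
          have h2 : |x - a| = x - a := abs_of_nonneg (by linarith [hx.1])
          have h3 := abs_le.mp h1
          rw [h2] at h3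
          linarith [h3.2]
      calc (0:ℝ) = u a := ha0.symm
        _ ≤ u b := mono (Set.left_mem_Icc.mpr hab) (Set.right_mem_Icc.mpr hab) hab
    · have hIcc : Set.Icc b a ⊆ I := by rwa [Set.uIcc_of_ge hab] at hsub
      have anti : AntitoneOn u (Set.Icc b a) := by
        apply antitoneOn_of_deriv_nonpos (convex_Icc b a)
        · exact fun x hx => (hu' x (hIcc hx)).continuousAt.continuousWithinAt
        · intro x hx
          rw [interior_Icc] at hx
          exact (hu' x (hIcc (Set.mem_Icc_of_Ioo hx))).differentiableAt.differentiableWithinAt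
        · intro x hx
          rw [interior_Icc] at hx
          have hxI : x ∈ I := hIcc (Set.mem_Icc_of_Ioo hx)
          rw [(hu' x hxI).deriv]
          have h1 := hlip x hxI
          have h2 : |x - a| = a - x := by
            rw [abs_of_nonpos (by linarith [hx.2])]; ring
          have h3 := abs_le.mp h1
          rw [h2] at h3
          linarith [h3.1]
      calc (0:ℝ) = u a := ha0.symm
        _ ≤ u b := anti (Set.left_mem_Icc.mpr hab) (Set.right_mem_Icc.mpr hab) hab
  have key' : 0 ≤ K / 2 * (b - a) ^ 2 - ψ b := key
  linarith

lemma taylor_one (I : Set ℝ) (hI : Convex ℝ I) (a b : ℝ) (ha : a ∈ I) (hb : b ∈ I)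
    (p p' : ℝ → ℝ) (K : ℝ)
    (hp : ∀ x ∈ I, HasDerivAt p (p' x) x)
    (hlip : ∀ x ∈ I, |p' x - p' a| ≤ K * |x - a|) :
    |p b - p a - p' a * (b - a)| ≤ K / 2 * (b - a) ^ 2 := by
  set φ : ℝ → ℝ := fun x => p x - p a - p' a * (x - a) with hφdef
  have hφ : ∀ x ∈ I, HasDerivAt φ (p' x - p' a) x := by
    intro x hx
    have h1 : HasDerivAt (fun x => p' a * (x - a)) (p' a) x := by
      simpa using ((hasDerivAt_id x).sub_const a).const_mul (p' a)
    exact ((hp x hx).sub_const (p a)).sub h1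
  have hφa : φ a = 0 := by simp [hφdef]
  have h1 := aux_one_side I hI a b ha hb K φ (fun x => p' x - p' a) hφ hlip hφa
  have h2 := aux_one_side I hI a b ha hb K (fun x => -φ x) (fun x => -(p' x - p' a))
    (fun x hx => (hφ x hx).neg)
    (fun x hx => by rw [abs_neg]; exact hlip x hx)
    (by simp [hφa])
  have hb2 : -φ b ≤ K / 2 * (b - a) ^ 2 := h2
  have : |φ b| ≤ K / 2 * (b - a) ^ 2 := abs_le.mpr ⟨by linarith, h1⟩
  exact this

theorem key_error_estimate_young
    (I : Set ℝ) (hI : Convex ℝ I)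
    (ωs ωr ωr1 : ℝ) (hωs : ωs ∈ I) (hωr : ωr ∈ I) (hωr1 : ωr1 ∈ I)
    (f f' f'' g g' g'' g''' : ℝ → ℝ) (γ γ₁ ℓ₁ ℓ₂ : ℝ)
    (hf' : ∀ x ∈ I, HasDerivAt f (f' x) x)
    (hf'' : ∀ x ∈ I, HasDerivAt f' (f'' x) x)
    (hfs : f' ωs = 0)
    (hLipf : ∀ x ∈ I, ∀ y ∈ I, |f'' x - f'' y| ≤ γ * |x - y|)
    (hl1 : 0 < ℓ₁) (hf''r : ℓ₁ ≤ |f'' ωr|)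
    (hg' : ∀ x ∈ I, HasDerivAt g (g' x) x)
    (hg'' : ∀ x ∈ I, HasDerivAt g' (g'' x) x)
    (hg''' : ∀ x ∈ I, HasDerivAt g'' (g''' x) x)
    (hg3 : ∀ x ∈ I, |g''' x| ≤ γ₁)
    (hl2 : 0 < ℓ₂) (hg''r : ℓ₂ ≤ |g'' ωr|)
    (hinterp : f' ωr = g' ωr) (hopt : g' ωr1 = 0)
    (δ c₁ c₂ c₃ : ℝ)
    (hδ : δ = max |ωr1 - ωs| |ωr - ωs|)
    (hc₁ : c₁ = γ₁ / ℓ₂) (hc₂ : c₂ = 1 / (ℓ₁ * ℓ₂))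
    (hc₃ : c₃ = γ / (2 * ℓ₁) + γ₁ / ℓ₂) :
    (1 - c₁ * δ) * |ωr1 - ωs| ≤
      c₂ * |g'' ωr - f'' ωr| * |f' ωr| + c₃ * |ωr - ωs| ^ 2 := by
  have hA : f'' ωr ≠ 0 := by
    intro h; rw [h, abs_zero] at hf''r; linarith
  have hB : g'' ωr ≠ 0 := by
    intro h; rw [h, abs_zero] at hg''r; linarith
  have hγ₁ : 0 ≤ γ₁ := le_trans (abs_nonneg _) (hg3 ωr hωr)
  -- Lipschitz bound for g'' from the bound on g'''
  have hlipg : ∀ x ∈ I, |g'' x - g'' ωr| ≤ γ₁ * |x - ωr| := by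
    intro x hx
    have := hI.norm_image_sub_le_of_norm_hasDerivWithin_le
      (fun y hy => (hg''' y hy).hasDerivWithinAt)
      (fun y hy => by rw [Real.norm_eq_abs]; exact hg3 y hy) hωr hx
    simpa [Real.norm_eq_abs] using this
  -- Taylor estimates
  have hEf := taylor_one I hI ωr ωs hωr hωs f' f'' γ hf'' (fun x hx => hLipf x hx ωr hωr)
  have hEg := taylor_one I hI ωr ωr1 hωr hωr1 g' g'' γ₁ hg'' hlipg
  set Ef : ℝ := f' ωs - f' ωr - f'' ωr * (ωs - ωr) with hEfdef
  set Eg : ℝ := g' ωr1 - g' ωr - g'' ωr * (ωr1 - ωr) with hEgdef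
  set A : ℝ := f'' ωr
  set B : ℝ := g'' ωr
  set F : ℝ := f' ωr
  have eqA : A * (ωs - ωr) = -F - Ef := by rw [hEfdef]; rw [hfs]; ring
  have eqB : B * (ωr1 - ωr) = -F - Eg := by rw [hEgdef]; rw [hopt, ← hinterp]; ring
  have e1 : ωs - ωr = (-F - Ef) / A := by rw [eq_div_iff hA]; linear_combination eqA
  have e2 : ωr1 - ωr = (-F - Eg) / B := by rw [eq_div_iff hB]; linear_combination eqB
  have hident2 : ωr1 - ωs = Ef / A - Eg / B + F * (B - A) / (A * B) := by
    have : ωr1 - ωs = (-F - Eg) / B - (-F - Ef) / A := by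
      rw [← e1, ← e2]; ring
    rw [this]; field_simp; ring
  set D : ℝ := |ωr1 - ωs| with hD
  have tri : D ≤ |Ef| / ℓ₁ + |Eg| / ℓ₂ + |F| * |B - A| / (ℓ₁ * ℓ₂) := by
    rw [hD, hident2]
    calc |Ef / A - Eg / B + F * (B - A) / (A * B)|
        ≤ |Ef / A - Eg / B| + |F * (B - A) / (A * B)| := abs_add_le _ _
      _ ≤ |Ef / A| + |Eg / B| + |F * (B - A) / (A * B)| := by
          gcongr; exact abs_sub _ _
      _ = |Ef| / |A| + |Eg| / |B| + |F| * |B - A| / (|A| * |B|) := by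
          rw [abs_div, abs_div, abs_div, abs_mul, abs_mul]
      _ ≤ |Ef| / ℓ₁ + |Eg| / ℓ₂ + |F| * |B - A| / (ℓ₁ * ℓ₂) := by
          gcongr <;> first
            | positivity
            | exact hf''r
            | exact hg''r
            | exact mul_le_mul hf''r hg''r (le_of_lt hl2) (abs_nonneg _)
  have hDδ : D ≤ δ := by rw [hδ]; exact le_max_left _ _
  have hδ0 : 0 ≤ δ := le_trans (abs_nonneg _) hDδ
  have hD0 : 0 ≤ D := hD ▸ abs_nonneg _
  have hsq : (ωr1 - ωs) ^ 2 ≤ δ * D := by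
    have h2 : (ωr1 - ωs) ^ 2 = D * D := by rw [hD, ← pow_two, sq_abs]
    have h3 : D * D ≤ δ * D := mul_le_mul_of_nonneg_right hDδ hD0
    linarith
  have young : (ωr1 - ωr) ^ 2 ≤ 2 * (ωr1 - ωs) ^ 2 + 2 * (ωr - ωs) ^ 2 := by
    nlinarith [sq_nonneg (ωr1 - ωs + (ωr - ωs)), sq_nonneg (ωr1 - ωs - (ωr - ωs))]
  -- combine
  have hEg2 : |Eg| / ℓ₂ ≤ (γ₁ * (δ * D) + γ₁ * (ωr - ωs) ^ 2) / ℓ₂ := by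
    gcongr
    calc |Eg| ≤ γ₁ / 2 * (ωr1 - ωr) ^ 2 := hEg
      _ ≤ γ₁ * (ωr1 - ωs) ^ 2 + γ₁ * (ωr - ωs) ^ 2 := by
          have h4 := mul_le_mul_of_nonneg_left young hγ₁
          linarith
      _ ≤ γ₁ * (δ * D) + γ₁ * (ωr - ωs) ^ 2 := by
          have h5 := mul_le_mul_of_nonneg_left hsq hγ₁
          linarith
  have hEf2 : |Ef| / ℓ₁ ≤ (γ / 2 * (ωr - ωs) ^ 2) / ℓ₁ := by
    gcongr
    calc |Ef| ≤ γ / 2 * (ωs - ωr) ^ 2 := hEf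
      _ = γ / 2 * (ωr - ωs) ^ 2 := by ring
  have hfinal : D ≤ (γ / 2 * (ωr - ωs) ^ 2) / ℓ₁
      + (γ₁ * (δ * D) + γ₁ * (ωr - ωs) ^ 2) / ℓ₂
      + |F| * |B - A| / (ℓ₁ * ℓ₂) := by linarith
  have habs2 : |ωr - ωs| ^ 2 = (ωr - ωs) ^ 2 := sq_abs _
  rw [hc₁, hc₂, hc₃, habs2]
  have expand1 : (γ₁ * (δ * D) + γ₁ * (ωr - ωs) ^ 2) / ℓ₂
      = γ₁ / ℓ₂ * (δ * D) + γ₁ / ℓ₂ * (ωr - ωs) ^ 2 := by ring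
  have expand2 : (γ / 2 * (ωr - ωs) ^ 2) / ℓ₁ = γ / (2 * ℓ₁) * (ωr - ωs) ^ 2 := by
    field_simp
  have expand3 : |F| * |B - A| / (ℓ₁ * ℓ₂) = 1 / (ℓ₁ * ℓ₂) * |B - A| * |F| := by ring
  rw [expand1, expand2, expand3] at hfinal
  have : (1 - γ₁ / ℓ₂ * δ) * D ≤ 1 / (ℓ₁ * ℓ₂) * |B - A| * |F| + (γ / (2 * ℓ₁) + γ₁ / ℓ₂) * (ωr - ωs) ^ 2 := by
    linarith [hfinal]
  exact this
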